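/- arXiv:1801.02347 — 6 statements merged into one kernel-verified Lean document; each statement's English description precedes it below -/
import Mathlib

section
/- Let H be a finite group acting on finite sets A and B such that the diagonal action of H on A × B is transitive, and let F be a field with char(F) ∤ |H|. Then the trivial representation is the only irreducible F-representation of H occurring in both F[A] and F[B]. -/
/-- If a finite group `H` acts on finite sets `A` and `B` with transitive diagonal
action on `A × B`, and `char F ∤ |H|`, then the trivial representation is the only
irreducible `F`-representation of `H` occurring in both permutation modules
`F[A]` and `F[B]`. -/
theorem stmt_1 (H A B F : Type) [Group H] [Fintype H] [Fintype A] [Fintype B]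
    [MulAction H A] [MulAction H B] [Field F]
    (hchar : ¬ (ringChar F ∣ Fintype.card H))
    (htrans : MulAction.IsPretransitive H (A × B))
    (V : Type) [AddCommGroup V] [Module (MonoidAlgebra F H) V]
    (hsimple : IsSimpleModule (MonoidAlgebra F H) V)
    (hA : ∃ W : Submodule (MonoidAlgebra F H) (Representation.ofMulAction F H A).asModule,
      Nonempty (V ≃ₗ[MonoidAlgebra F H] W))
    (hB : ∃ W : Submodule (MonoidAlgebra F H) (Representation.ofMulAction F H B).asModule,
      Nonempty (V ≃ₗ[MonoidAlgebra F H] W)) :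
    ∀ (h : H) (v : V), (MonoidAlgebra.of F H h) • v = v := by
  classical
  intro h v
  haveI : NeZero (Fintype.card H : F) :=
    ⟨fun hc => hchar ((ringChar.spec F _).mp hc)⟩
  set ρA := Representation.ofMulAction F H A with hρA
  set ρB := Representation.ofMulAction F H B with hρB
  obtain ⟨WA, ⟨eA⟩⟩ := hA
  obtain ⟨WB, ⟨eB⟩⟩ := hB
  obtain ⟨p, hp⟩ := @MonoidAlgebra.exists_leftInverse_of_injective F _ H _
    ⟨by rw [Nat.card_eq_fintype_card]; exact NeZero.ne _⟩ _ V _ _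
    (ρA.asModule) _ _
    (WA.subtype ∘ₗ eA.toLinearMap)
    (LinearMap.ker_eq_bot_of_injective (by exact WA.injective_subtype.comp eA.injective))
  let φ : ρA.asModule →ₗ[MonoidAlgebra F H] ρB.asModule :=
    WB.subtype ∘ₗ eB.toLinearMap ∘ₗ p
  -- scalar action of `F` via `single 1 c`
  have smulA : ∀ (c : F) (x : ρA.asModule),
      (MonoidAlgebra.single (1:H) c) • x = c • x := by
    intro c x
    apply ρA.asModuleEquiv.injective
    rw [Representation.asModuleEquiv_map_smul, Representation.asAlgebraHom_single]
    simp only [map_one, LinearMap.smul_apply, Module.End.one_apply]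
    rfl
  have smulB : ∀ (c : F) (x : ρB.asModule),
      (MonoidAlgebra.single (1:H) c) • x = c • x := by
    intro c x
    apply ρB.asModuleEquiv.injective
    rw [Representation.asModuleEquiv_map_smul, Representation.asAlgebraHom_single]
    simp only [map_one, LinearMap.smul_apply, Module.End.one_apply]
    rfl
  -- the `F`-linear map on the Finsupp side
  let G : MonoidAlgebra F A →ₗ[F] MonoidAlgebra F B :=
    { toFun := fun f => ρB.asModuleEquiv (φ (ρA.asModuleEquiv.symm f))
      map_add' := by intro f g; simp [map_add]
      map_smul' := by
        intro c f
        have h1 : ρA.asModuleEquiv.symm (c • f) = c • ρA.asModuleEquiv.symm f := rfl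
        have h2 : ∀ y : ρB.asModule, ρB.asModuleEquiv (c • y) = c • ρB.asModuleEquiv y :=
          fun y => rfl
        show ρB.asModuleEquiv (φ (ρA.asModuleEquiv.symm (c • f)))
          = (RingHom.id F) c • ρB.asModuleEquiv (φ (ρA.asModuleEquiv.symm f))
        rw [h1, ← smulA c, map_smul, smulB c, h2]
        rfl }
  -- equivariance transferred to the Finsupp side
  have equiv : ∀ (g : H) (f : MonoidAlgebra F A), G (ρA g f) = ρB g (G f) := by
    intro g f
    have h1 : ρA.asModuleEquiv.symm (ρA g f) =
        MonoidAlgebra.of F H g • ρA.asModuleEquiv.symm f :=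
      Representation.asModuleEquiv_symm_map_rho ρA g f
    show ρB.asModuleEquiv (φ (ρA.asModuleEquiv.symm (ρA g f))) = _
    rw [h1, map_smul, Representation.asModuleEquiv_map_smul]
    simp only [MonoidAlgebra.of_apply, Representation.asAlgebraHom_single, one_smul]
    rfl
  -- constancy of the matrix entries in the second variable
  have key : ∀ (a : A) (b b' : B),
      (G (MonoidAlgebra.single a 1)).coeff b = (G (MonoidAlgebra.single a 1)).coeff b' := by
    intro a b b'
    obtain ⟨g, hg⟩ := htrans.exists_smul_eq ((a, b') : A × B) (a, b)
    have ha : g • a = a := congrArg Prod.fst hg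
    have hb : g • b' = b := congrArg Prod.snd hg
    calc (G (MonoidAlgebra.single a 1)).coeff b
        = (G (MonoidAlgebra.single (g • a) 1)).coeff (g • b') := by rw [ha, hb]
      _ = (G (ρA g (MonoidAlgebra.single a 1))).coeff (g • b') := by
          rw [Representation.ofMulAction_single]
      _ = (ρB g (G (MonoidAlgebra.single a 1))).coeff (g • b') := by rw [equiv]
      _ = (G (MonoidAlgebra.single a 1)).coeff (g⁻¹ • g • b') := by
          rw [Representation.coeff_ofMulAction]
      _ = (G (MonoidAlgebra.single a 1)).coeff b' := by rw [inv_smul_smul]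
  -- hence every value of `G` is a constant function
  have const : ∀ (f : MonoidAlgebra F A) (b b' : B), (G f).coeff b = (G f).coeff b' := by
    intro f
    induction f using MonoidAlgebra.induction_linear with
    | zero => simp
    | add f₁ f₂ h1 h2 => intro b b'; simp only [map_add, MonoidAlgebra.coeff_add, Finsupp.add_apply]; rw [h1 b b', h2 b b']
    | single a c =>
        intro b b'
        have : MonoidAlgebra.single a c = c • MonoidAlgebra.single a (1:F) := by simp
        rw [this, map_smul, MonoidAlgebra.coeff_smul_apply, MonoidAlgebra.coeff_smul_apply, smul_eq_mul,
          smul_eq_mul, key a b b']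
  -- the element x with φ x = eB v
  set x : ρA.asModule := WA.subtype (eA v) with hx
  have hpx : p x = v := DFunLike.congr_fun hp v
  have hφx : φ x = WB.subtype (eB v) := by
    simp only [φ, LinearMap.comp_apply, hpx, LinearEquiv.coe_toLinearMap]
  have hinv : (MonoidAlgebra.of F H h) • φ x = φ x := by
    apply ρB.asModuleEquiv.injective
    have h1 : ρB.asModuleEquiv ((MonoidAlgebra.of F H h) • φ x)
        = ρB h (ρB.asModuleEquiv (φ x)) := by
      rw [Representation.asModuleEquiv_map_smul]
      simp only [MonoidAlgebra.of_apply, Representation.asAlgebraHom_single, one_smul]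
    rw [h1]
    have h2 : ρB.asModuleEquiv (φ x) = G (ρA.asModuleEquiv x) := by
      show _ = ρB.asModuleEquiv (φ (ρA.asModuleEquiv.symm (ρA.asModuleEquiv x)))
      rw [LinearEquiv.symm_apply_apply]
    rw [h2]
    ext b
    rw [Representation.coeff_ofMulAction]
    exact const _ _ _
  have hWB : (MonoidAlgebra.of F H h) • (eB v) = eB v := by
    apply Subtype.ext
    have : (↑((MonoidAlgebra.of F H h) • (eB v)) : ρB.asModule)
        = (MonoidAlgebra.of F H h) • (↑(eB v) : ρB.asModule) := rfl
    rw [this]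
    have h3 : (↑(eB v) : ρB.asModule) = φ x := hφx.symm
    rw [h3, hinv]
  apply eB.injective
  rw [map_smul, hWB]
end

section
/- Let G be a group acting on a spherically symmetric rooted tree T by root-preserving automorphisms. If G acts distance transitively on T (i.e., for every n and all vertices u₁,u₂,v₁,v₂ in level L_n with d(u₁,u₂) = d(v₁,v₂) there is g ∈ G with g u_i = v_i), then G acts locally 2-transitively on T. -/
/-- Vertices of level `n` of the spherically symmetric rooted tree on `(X i)`. -/
abbrev Vert (X : ℕ → Type) (n : ℕ) := ∀ i : Fin n, X i.val

/-- The predecessor (parent) of a vertex of level `n+1`. -/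
def pred {X : ℕ → Type} {n : ℕ} (v : Vert X (n + 1)) : Vert X n :=
  fun i => v i.castSucc

/-- A (root-preserving) action of `G` on the tree: compatible actions on all levels. -/
structure TreeAction (X : ℕ → Type) (G : Type) [Group G] where
  ρ : ∀ n : ℕ, G →* Equiv.Perm (Vert X n)
  compat : ∀ (n : ℕ) (g : G) (v : Vert X (n + 1)), pred (ρ (n + 1) g v) = ρ n g (pred v)

variable {X : ℕ → Type} {G : Type} [Group G]

/-- Spherically transitive action. -/
def SphTrans (A : TreeAction X G) : Prop := ∀ (n : ℕ) (u v : Vert X n), ∃ g : G, A.ρ n g u = v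

/-- Locally 2-transitive action. -/
def LocTwoTrans (A : TreeAction X G) : Prop :=
  SphTrans A ∧ ∀ (n : ℕ) (u v : Vert X n), u ≠ v →
    ∀ u₁ u₂ v₁ v₂ : Vert X (n + 1), pred u₁ = u → pred u₂ = u → pred v₁ = v → pred v₂ = v →
      ∃ g : G, A.ρ n g u = u ∧ A.ρ n g v = v ∧ A.ρ (n + 1) g u₁ = u₂ ∧ A.ρ (n + 1) g v₁ = v₂

variable [∀ i, DecidableEq (X i)]

/-- Length of the longest common prefix of two vertices of level `n`. -/
def cpl {n : ℕ} (u v : Vert X n) : ℕ :=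
  Nat.findGreatest (fun k => ∀ i : Fin n, (i : ℕ) < k → u i = v i) n

/-- The shortest-path distance between two vertices of level `n`. -/
def tdist {n : ℕ} (u v : Vert X n) : ℕ := 2 * (n - cpl u v)

lemma fg_congr (P Q : ℕ → Prop) [DecidablePred P] [DecidablePred Q] :
    ∀ n, (∀ k, k ≤ n → (P k ↔ Q k)) → Nat.findGreatest P n = Nat.findGreatest Q n := by
  intro n
  induction n with
  | zero => intro _; rfl
  | succ m ih =>
    intro h
    rw [Nat.findGreatest_succ, Nat.findGreatest_succ,
      ih (fun k hk => h k (Nat.le_succ_of_le hk))]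
    by_cases hp : P (m + 1)
    · rw [if_pos hp, if_pos ((h _ le_rfl).mp hp)]
    · rw [if_neg hp, if_neg (fun hq => hp ((h _ le_rfl).mpr hq))]

lemma cpl_pred {n : ℕ} (a b : Vert X (n + 1)) (h : pred a ≠ pred b) :
    cpl a b = cpl (pred a) (pred b) := by
  unfold cpl
  have hP : ¬ (∀ i : Fin (n + 1), (i : ℕ) < n + 1 → a i = b i) := by
    intro hall
    exact h (funext fun i => hall i.castSucc (by simpa using i.isLt.trans (Nat.lt_succ_self n)))
  rw [Nat.findGreatest_succ, if_neg hP]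
  refine fg_congr _ _ n (fun k hk => ?_)
  constructor
  · intro hall i hi
    exact hall i.castSucc (by simpa using hi)
  · intro hall i hi
    have hin : (i : ℕ) < n := lt_of_lt_of_le hi hk
    have := hall ⟨i, hin⟩ hi
    simpa [pred, Fin.castSucc, Fin.ext_iff] using this

lemma cpl_self {n : ℕ} (u : Vert X n) : cpl u u = n :=
  Nat.findGreatest_eq (fun _ _ => rfl)

/-- Distance-transitive actions on a spherically symmetric rooted tree are
locally 2-transitive. -/
theorem stmt_4 {X : ℕ → Type} {G : Type} [Group G] [∀ i, DecidableEq (X i)]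
    [∀ i, Fintype (X i)] (hcard : ∀ i, 2 ≤ Fintype.card (X i))
    (A : TreeAction X G)
    (hdist : ∀ (n : ℕ) (u₁ u₂ v₁ v₂ : Vert X n), tdist u₁ u₂ = tdist v₁ v₂ →
      ∃ g : G, A.ρ n g u₁ = v₁ ∧ A.ρ n g u₂ = v₂) :
    LocTwoTrans A := by
  constructor
  · intro n u v
    obtain ⟨g, hg, -⟩ := hdist n u u v v (by simp [tdist, cpl_self])
    exact ⟨g, hg⟩
  · intro n u v hne u₁ u₂ v₁ v₂ h1 h2 h3 h4
    have hne1 : pred u₁ ≠ pred v₁ := by rw [h1, h3]; exact hne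
    have hne2 : pred u₂ ≠ pred v₂ := by rw [h2, h4]; exact hne
    have hd : tdist u₁ v₁ = tdist u₂ v₂ := by
      unfold tdist
      rw [cpl_pred _ _ hne1, cpl_pred _ _ hne2, h1, h2, h3, h4]
    obtain ⟨g, hgu, hgv⟩ := hdist (n + 1) u₁ v₁ u₂ v₂ hd
    refine ⟨g, ?_, ?_, hgu, hgv⟩
    · rw [← h1]; rw [← A.compat n g u₁, hgu, h2, h1]
    · rw [← h3]; rw [← A.compat n g v₁, hgv, h4, h3]
end

section
/- Let H be a finite group with |H| ≥ 3, acting on itself by left multiplication, and let G_C = … H ≀ H ≀ H be the corresponding iterated wreath product acting on the |H|-regular rooted tree T. Then G_C does not act distance transitively on T. -/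
variable {X : ℕ → Type} {G : Type} [Group G]

variable [∀ i, DecidableEq (X i)]

/-- Membership in the iterated wreath product `… H ≀ H ≀ H` of a finite group `H`
acting on itself by left multiplication: `f` is a root-preserving automorphism of
the `|H|`-regular rooted tree all of whose labels are left translations by
elements of `H`. -/
def InGCReg (H : Type) [Group H] (f : ∀ m : ℕ, Equiv.Perm (Vert (fun _ => H) m)) : Prop :=
  (∀ (n : ℕ) (v : Vert (fun _ => H) (n + 1)), pred (f (n + 1) v) = f n (pred v)) ∧
  ∀ (n : ℕ) (u : Vert (fun _ => H) n), ∃ h : H,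
    ∀ x : H, f (n + 1) (Fin.snoc u x) = Fin.snoc (f n u) (h * x)

/-- For `|H| ≥ 3`, the iterated wreath product `… H ≀ H ≀ H` does not act distance
transitively on the `|H|`-regular rooted tree. -/
theorem stmt_7 (H : Type) [Group H] [Fintype H] [DecidableEq H]
    (hH : 3 ≤ Fintype.card H) :
    ¬ (∀ (n : ℕ) (u₁ u₂ v₁ v₂ : Vert (fun _ => H) n), tdist u₁ u₂ = tdist v₁ v₂ →
        ∃ f, InGCReg H f ∧ f n u₁ = v₁ ∧ f n u₂ = v₂) := by
  intro Hyp
  -- pick y, z distinct from 1 and each other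
  obtain ⟨y, hy1⟩ : ∃ y : H, y ≠ 1 := by
    have h2 : 1 < Fintype.card H := by omega
    obtain ⟨y, hy⟩ := Fintype.exists_ne_of_one_lt_card h2 1
    exact ⟨y, hy⟩
  obtain ⟨z, hz⟩ : ∃ z : H, z ∉ ({1, y} : Finset H) := by
    have hle : ({1, y} : Finset H).card ≤ 2 := by
      apply le_trans (Finset.card_insert_le _ _); simp
    have hpos : 0 < (({1, y} : Finset H)ᶜ).card := by
      rw [Finset.card_compl]; omega
    obtain ⟨z, hzmem⟩ := Finset.card_pos.mp hpos
    exact ⟨z, by simpa using hzmem⟩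
  have hz1 : z ≠ 1 := by simp at hz; tauto
  have hzy : z ≠ y := by simp at hz; tauto
  set u₁ : Vert (fun _ => H) 2 := fun _ => 1 with hu₁
  set u₂ : Vert (fun _ => H) 2 := fun i => if (i : ℕ) = 0 then y else 1 with hu₂
  set v₂ : Vert (fun _ => H) 2 := fun i => if (i : ℕ) = 0 then z else 1 with hv₂
  have hcpl : ∀ w : Vert (fun _ => H) 2, w ⟨0, by omega⟩ ≠ 1 → cpl u₁ w = 0 := by
    intro w hw
    rw [cpl, Nat.findGreatest_eq_zero_iff]
    intro k hk _ hP
    exact hw ((hP ⟨0, by omega⟩ hk).symm)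
  have hd : tdist u₁ u₂ = tdist u₁ v₂ := by
    have h1 : cpl u₁ u₂ = 0 := hcpl u₂ (by simpa [hu₂] using hy1)
    have h2 : cpl u₁ v₂ = 0 := hcpl v₂ (by simpa [hv₂] using hz1)
    simp [tdist, h1, h2]
  obtain ⟨f, ⟨hpred, hlab⟩, hf1, hf2⟩ := Hyp 2 u₁ u₂ u₁ v₂ hd
  -- the root vertex
  set u0 : Vert (fun _ => H) 0 := fun i => i.elim0 with hu0
  have hsub0 : ∀ a b : Vert (fun _ => H) 0, a = b := by
    intro a b; funext i; exact i.elim0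
  have snoc1 : ∀ (u : Vert (fun _ => H) 0) (a : H) (i : Fin 1),
      (Fin.snoc u a : Vert (fun _ => H) 1) i = a := by
    intro u a i
    have hi : i = Fin.last 0 := by ext; omega
    rw [hi]
    exact Fin.snoc_last _ _
  obtain ⟨h₀, hh₀⟩ := hlab 0 u0
  have hf0 : f 0 u0 = u0 := hsub0 _ _
  -- f 1 w = fun _ => h₀ * w 0
  have hlevel1 : ∀ w : Vert (fun _ => H) 1, f 1 w = fun _ => h₀ * w 0 := by
    intro w
    have hw : w = Fin.snoc u0 (w 0) := by
      funext i
      rw [snoc1]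
      congr 1
      ext; omega
    have h := hh₀ (w 0)
    rw [hf0] at h
    have key : f 1 w = Fin.snoc u0 (h₀ * w 0) := by
      calc f 1 w = f 1 (Fin.snoc u0 (w 0)) := by rw [← hw]
        _ = Fin.snoc u0 (h₀ * w 0) := h
    rw [key]; funext i; exact snoc1 _ _ i
  -- h₀ = 1 from f 2 u₁ = u₁
  have e1 : (fun _ : Fin 1 => h₀ * (pred u₁) 0) = pred u₁ := by
    rw [← hlevel1 (pred u₁), ← hpred 1 u₁, hf1]
  have hh1 : h₀ = 1 := by
    have h := congrFun e1 0
    have h01 : (pred u₁) 0 = 1 := rfl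
    rw [h01, mul_one] at h
    exact h
  -- contradiction from f 2 u₂ = v₂
  have e2 : pred v₂ = fun _ : Fin 1 => h₀ * (pred u₂) 0 := by
    rw [← hf2, hpred 1 u₂, hlevel1 (pred u₂)]
  have h := congrFun e2 0
  have hpu₂0 : (pred u₂) 0 = y := rfl
  have hpv₂0 : (pred v₂) 0 = z := rfl
  rw [hpv₂0, hpu₂0, hh1, one_mul] at h
  exact hzy h
end

section
/- Let G ≤ Aut(T) act spherically transitively on a spherically symmetric rooted tree T, and fix a vertex u_n ∈ L_n for each n ≥ 0. Then G acts locally 2-transitively on T if and only if for every n ≥ 1 and every v ∈ L_n with u_{n+1} ∉ D(v), the group St_G(u_{n+1}) ∩ St_G(v) acts transitively on D(v). -/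
variable {X : ℕ → Type} {G : Type} [Group G]

variable [∀ i, DecidableEq (X i)]

/-- Criterion for local 2-transitivity: a spherically transitive action is locally
2-transitive iff for every `n ≥ 1` and every vertex `v` of level `n` not the
predecessor of the chosen vertex `u (n+1)`, the common stabiliser of `u (n+1)`
and `v` acts transitively on the descendants of `v`. -/
theorem stmt_8 {X : ℕ → Type} {G : Type} [Group G] (A : TreeAction X G)
    (hsph : SphTrans A) (u : ∀ n : ℕ, Vert X n) :
    LocTwoTrans A ↔
      ∀ n : ℕ, 1 ≤ n → ∀ v : Vert X n, pred (u (n + 1)) ≠ v →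
        ∀ w₁ w₂ : Vert X (n + 1), pred w₁ = v → pred w₂ = v →
          ∃ g : G, A.ρ (n + 1) g (u (n + 1)) = u (n + 1) ∧ A.ρ n g v = v ∧
            A.ρ (n + 1) g w₁ = w₂ := by

  constructor
  · intro hloc n hn v hv w₁ w₂ hw₁ hw₂
    obtain ⟨g, _, hg2, hg3, hg4⟩ := hloc.2 n (pred (u (n+1))) v hv
      (u (n+1)) (u (n+1)) w₁ w₂ rfl rfl hw₁ hw₂
    exact ⟨g, hg3, hg2, hg4⟩
  · intro hcrit
    refine ⟨hsph, ?_⟩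
    intro n a b hab u₁ u₂ v₁ v₂ hu₁ hu₂ hv₁ hv₂
    have hn : 1 ≤ n := by
      rcases Nat.eq_zero_or_pos n with h | h
      · subst h; exact absurd (funext fun i => i.elim0) hab
      · exact h
    have conj : ∀ (m : ℕ) (h g : G) (x : Vert X m),
        A.ρ m (h⁻¹ * g * h) x = (A.ρ m h)⁻¹ (A.ρ m g (A.ρ m h x)) := by
      intro m h g x
      simp [map_mul, map_inv, Equiv.Perm.mul_apply]
    have inv_cancel : ∀ (m : ℕ) (h : G) (x : Vert X m),
        (A.ρ m h)⁻¹ (A.ρ m h x) = x := fun m h x => Equiv.symm_apply_apply _ _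
    -- Step 1: g₁ fixing a, b, u₁ and mapping v₁ to v₂
    obtain ⟨h₁, hh₁⟩ := hsph (n+1) u₁ (u (n+1))
    have hpred₁ : pred (u (n+1)) = A.ρ n h₁ a := by
      rw [← hh₁, A.compat, hu₁]
    have hne₁ : pred (u (n+1)) ≠ A.ρ n h₁ b := by
      rw [hpred₁]
      exact fun h => hab ((A.ρ n h₁).injective h)
    obtain ⟨g, hgfix, hgb, hgv⟩ := hcrit n hn (A.ρ n h₁ b) hne₁
      (A.ρ (n+1) h₁ v₁) (A.ρ (n+1) h₁ v₂)
      (by rw [A.compat, hv₁]) (by rw [A.compat, hv₂])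
    set g₁ := h₁⁻¹ * g * h₁ with hg₁def
    have hg₁u₁ : A.ρ (n+1) g₁ u₁ = u₁ := by
      rw [conj, hh₁, hgfix, ← hh₁, inv_cancel]
    have hg₁a : A.ρ n g₁ a = a := by
      have := A.compat n g₁ u₁
      rw [hg₁u₁, hu₁] at this
      exact this.symm
    have hg₁b : A.ρ n g₁ b = b := by
      rw [conj, hgb, inv_cancel]
    have hg₁v₁ : A.ρ (n+1) g₁ v₁ = v₂ := by
      rw [conj, hgv, inv_cancel]
    -- Step 2: g₂ fixing a, b, v₂ and mapping u₁ to u₂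
    obtain ⟨h₂, hh₂⟩ := hsph (n+1) v₂ (u (n+1))
    have hpred₂ : pred (u (n+1)) = A.ρ n h₂ b := by
      rw [← hh₂, A.compat, hv₂]
    have hne₂ : pred (u (n+1)) ≠ A.ρ n h₂ a := by
      rw [hpred₂]
      exact fun h => hab ((A.ρ n h₂).injective h.symm)
    obtain ⟨g', hgfix', hga', hgu'⟩ := hcrit n hn (A.ρ n h₂ a) hne₂
      (A.ρ (n+1) h₂ u₁) (A.ρ (n+1) h₂ u₂)
      (by rw [A.compat, hu₁]) (by rw [A.compat, hu₂])
    set g₂ := h₂⁻¹ * g' * h₂ with hg₂def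
    have hg₂v₂ : A.ρ (n+1) g₂ v₂ = v₂ := by
      rw [conj, hh₂, hgfix', ← hh₂, inv_cancel]
    have hg₂b : A.ρ n g₂ b = b := by
      have := A.compat n g₂ v₂
      rw [hg₂v₂, hv₂] at this
      exact this.symm
    have hg₂a : A.ρ n g₂ a = a := by
      rw [conj, hga', inv_cancel]
    have hg₂u₁ : A.ρ (n+1) g₂ u₁ = u₂ := by
      rw [conj, hgu', inv_cancel]
    refine ⟨g₂ * g₁, ?_, ?_, ?_, ?_⟩
    · rw [map_mul, Equiv.Perm.mul_apply, hg₁a, hg₂a]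
    · rw [map_mul, Equiv.Perm.mul_apply, hg₁b, hg₂b]
    · rw [map_mul, Equiv.Perm.mul_apply, hg₁u₁, hg₂u₁]
    · rw [map_mul, Equiv.Perm.mul_apply, hg₁v₁, hg₂v₂]
end

section
/- Let G act locally 2-transitively on T, let F have characteristic not dividing the Steinitz order of the closure of G, let v be a vertex, and let π be a nontrivial irreducible F-representation of St_G(v) occurring in the permutation module F[D(v)]. Then the induced representation Ind_{St_G(v)}^G(π) is irreducible. -/
variable {X : ℕ → Type} {G : Type} [Group G]

variable [∀ i, DecidableEq (X i)]

/-- The space of equivariant linear maps between two representations. -/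
def repHom {F : Type} [Field F] {G : Type} [Monoid G] {V W : Type}
    [AddCommGroup V] [Module F V] [AddCommGroup W] [Module F W]
    (ρV : Representation F G V) (ρW : Representation F G W) :
    Submodule F (V →ₗ[F] W) where
  carrier := {φ | ∀ g : G, φ ∘ₗ ρV g = ρW g ∘ₗ φ}
  add_mem' := by
    intro a b ha hb g
    rw [LinearMap.add_comp, LinearMap.comp_add, ha g, hb g]
  zero_mem' := by
    intro g
    simp
  smul_mem' := by
    intro c φ hφ g
    rw [LinearMap.smul_comp, LinearMap.comp_smul, hφ g]

/-- A representation is irreducible if it is nonzero and has no proper nonzero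
invariant subspace. -/
def Representation.IsIrred {F : Type} [Field F] {G : Type} [Monoid G] {V : Type}
    [AddCommGroup V] [Module F V] (ρ : Representation F G V) : Prop :=
  Nontrivial V ∧ ∀ W : Submodule F V, (∀ g : G, ∀ x ∈ W, ρ g x ∈ W) → W = ⊥ ∨ W = ⊤

/-- A representation is trivial if the group acts identically. -/
def Representation.IsTriv {F : Type} [Field F] {G : Type} [Monoid G] {V : Type}
    [AddCommGroup V] [Module F V] (ρ : Representation F G V) : Prop :=
  ∀ (g : G) (x : V), ρ g x = x

/-- `π` occurs in `ρ`, i.e. `π` is isomorphic to a subrepresentation of `ρ`. -/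
def Representation.OccursIn {F : Type} [Field F] {G : Type} [Monoid G] {V W : Type}
    [AddCommGroup V] [Module F V] [AddCommGroup W] [Module F W]
    (π : Representation F G V) (ρ : Representation F G W) : Prop :=
  ∃ j : V →ₗ[F] W, Function.Injective j ∧ ∀ (g : G) (x : V), j (π g x) = ρ g (j x)

/-- The carrier of the representation induced from a representation `π` of a
subgroup `S ≤ G`: the functions `f : G → V` with `f (s * x) = π s (f x)`. -/
def IndCarrier {F : Type} [Field F] {G : Type} [Group G] (S : Subgroup G) {V : Type}
    [AddCommGroup V] [Module F V] (π : Representation F S V) :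
    Submodule F (G → V) where
  carrier := {f | ∀ (s : S) (x : G), f (↑s * x) = π s (f x)}
  add_mem' := by
    intro a b ha hb s x
    simp only [Pi.add_apply, ha s x, hb s x, map_add]
  zero_mem' := by
    intro s x
    simp
  smul_mem' := by
    intro c f hf s x
    simp only [Pi.smul_apply, hf s x, map_smul]

/-- The representation of `G` induced from a representation `π` of a subgroup
`S ≤ G`, by right translation on functions. -/
def IndRep {F : Type} [Field F] {G : Type} [Group G] (S : Subgroup G) {V : Type}
    [AddCommGroup V] [Module F V] (π : Representation F S V) :
    Representation F G (IndCarrier S π) where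
  toFun h :=
    { toFun := fun f => ⟨fun x => (f : G → V) (x * h), by
        intro s x
        have := f.2 s (x * h)
        simpa [mul_assoc] using this⟩
      map_add' := fun f g => rfl
      map_smul' := fun c f => rfl }
  map_one' := by
    apply LinearMap.ext
    intro f
    apply Subtype.ext
    funext x
    simp
  map_mul' := by
    intro a b
    apply LinearMap.ext
    intro f
    apply Subtype.ext
    funext x
    simp [mul_assoc]

/-- The stabiliser of the vertex `v` in `G`. -/
def stab {X : ℕ → Type} {G : Type} [Group G] (A : TreeAction X G) {n : ℕ}
    (v : Vert X n) : Subgroup G where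
  carrier := {g | A.ρ n g v = v}
  one_mem' := by simp
  mul_mem' := by
    intro a b ha hb
    simp only [Set.mem_setOf_eq, map_mul, Equiv.Perm.mul_apply] at *
    rw [hb, ha]
  inv_mem' := by
    intro a ha
    simp only [Set.mem_setOf_eq, map_inv] at *
    exact (Equiv.symm_apply_eq _).mpr ha.symm

/-- The set of descendants of the vertex `v`. -/
def Desc (X : ℕ → Type) {n : ℕ} (v : Vert X n) : Type :=
  {w : Vert X (n + 1) // pred w = v}

/-- The stabiliser of `v` permutes the descendants of `v`. -/
def descPermHom {X : ℕ → Type} {G : Type} [Group G] (A : TreeAction X G) {n : ℕ}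
    (v : Vert X n) : stab A v →* Equiv.Perm (Desc X v) where
  toFun g :=
    { toFun := fun w => ⟨A.ρ (n + 1) g.1 w.1, by rw [A.compat, w.2]; exact g.2⟩
      invFun := fun w => ⟨A.ρ (n + 1) g.1⁻¹ w.1, by
        rw [A.compat, w.2]
        exact (stab A v).inv_mem g.2⟩
      left_inv := fun w => Subtype.ext (by
        simp [← Equiv.Perm.mul_apply, ← map_mul])
      right_inv := fun w => Subtype.ext (by
        show A.ρ (n + 1) g.1 (A.ρ (n + 1) g.1⁻¹ w.1) = w.1
        rw [← Equiv.Perm.mul_apply, ← map_mul]; simp) }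
  map_one' := by
    refine Equiv.ext fun w => Subtype.ext ?_
    show A.ρ (n + 1) ((1 : stab A v) : G) w.1 = w.1
    simp [Equiv.Perm.one_apply]
  map_mul' := by
    intro a b
    refine Equiv.ext fun w => Subtype.ext ?_
    show A.ρ (n + 1) ((a * b : stab A v) : G) w.1 = A.ρ (n + 1) a.1 (A.ρ (n + 1) b.1 w.1)
    simp [Equiv.Perm.mul_apply]

/-- The permutation representation of the stabiliser of `v` on `F[D(v)]`. -/
noncomputable def descRep (F : Type) [Field F] {X : ℕ → Type} {G : Type} [Group G]
    (A : TreeAction X G) {n : ℕ} (v : Vert X n) :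
    Representation F (stab A v) (Desc X v →₀ F) :=
  letI : MulAction (stab A v) (Desc X v) := MulAction.compHom _ (descPermHom A v)
  { toFun := fun g => Finsupp.lmapDomain F F (g • ·)
    map_one' := by ext; simp
    map_mul' := fun x y => by ext; simp [mul_smul] }

/-- The permutation representation of `G` on `F[L_n]`. -/
noncomputable def levelRep (F : Type) [Field F] {X : ℕ → Type} {G : Type} [Group G]
    (A : TreeAction X G) (n : ℕ) : Representation F G (Vert X n →₀ F) :=
  letI : MulAction G (Vert X n) := MulAction.compHom _ (A.ρ n)
  { toFun := fun g => Finsupp.lmapDomain F F (g • ·)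
    map_one' := by ext; simp
    map_mul' := fun x y => by ext; simp [mul_smul] }

/-- The subspace of `F[α]` of formal sums whose coefficients sum to zero. -/
noncomputable def zeroSum (F : Type) [Field F] (α : Type) : Submodule F (α →₀ F) :=
  LinearMap.ker (Finsupp.linearCombination F (fun _ : α => (1 : F)))

/-! ### Auxiliary machinery for the proof of `stmt_9` -/

section MaschkeAux

variable {F : Type} [Field F] {K : Type} [Group K] [Fintype K]
  {M V : Type} [AddCommGroup M] [Module F M] [AddCommGroup V] [Module F V]

/-- Maschke-type averaging: an equivariant retraction onto an equivariantly
embedded subrepresentation. -/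
lemma maschke_retraction (hK : (Fintype.card K : F) ≠ 0)
    (σ : Representation F K M) (τ : Representation F K V)
    (j : V →ₗ[F] M) (hj : Function.Injective j)
    (hje : ∀ (k : K) (x : V), j (τ k x) = σ k (j x)) :
    ∃ P : M →ₗ[F] V, (∀ x, P (j x) = x) ∧ ∀ (k : K) (y : M), P (σ k y) = τ k (P y) := by
  obtain ⟨p₀, hp₀⟩ := j.exists_leftInverse_of_injective (LinearMap.ker_eq_bot.mpr hj)
  set c : F := (Fintype.card K : F)⁻¹ with hc
  set P : M →ₗ[F] V := c • ∑ k : K, (τ k) ∘ₗ p₀ ∘ₗ (σ k⁻¹) with hP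
  have hPapp : ∀ y, P y = c • ∑ k : K, τ k (p₀ (σ k⁻¹ y)) := by
    intro y
    simp [hP, LinearMap.sum_apply]
  have hτmul : ∀ (a b : K) (x : V), τ a (τ b x) = τ (a * b) x := by
    intro a b x; rw [map_mul]; rfl
  have hσmul : ∀ (a b : K) (x : M), σ a (σ b x) = σ (a * b) x := by
    intro a b x; rw [map_mul]; rfl
  have hp₀j : ∀ x, p₀ (j x) = x := fun x => LinearMap.congr_fun hp₀ x
  refine ⟨P, ?_, ?_⟩
  · intro x
    have : ∀ k : K, τ k (p₀ (σ k⁻¹ (j x))) = x := by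
      intro k
      rw [← hje k⁻¹ x, hp₀j, hτmul, mul_inv_cancel, map_one]
      rfl
    rw [hPapp]
    simp only [this, Finset.sum_const, Finset.card_univ, ← Nat.cast_smul_eq_nsmul F]
    rw [smul_smul, hc, inv_mul_cancel₀ hK, one_smul]
  · intro k₀ y
    rw [hPapp, hPapp, map_smul]
    congr 1
    rw [map_sum]
    refine Fintype.sum_equiv (Equiv.mulLeft k₀⁻¹) _ _ ?_
    intro k
    simp only [Equiv.coe_mulLeft]
    rw [hσmul, hτmul]
    have e1 : k₀ * (k₀⁻¹ * k) = k := by group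
    have e2 : (k₀⁻¹ * k)⁻¹ = k⁻¹ * k₀ := by group
    rw [e1, e2]

/-- Maschke-type averaging: an equivariant section of an equivariant surjection. -/
lemma maschke_section (hK : (Fintype.card K : F) ≠ 0)
    (σ : Representation F K M) (τ : Representation F K V)
    (θ : M →ₗ[F] V) (hθ : Function.Surjective θ)
    (hθe : ∀ (k : K) (y : M), θ (σ k y) = τ k (θ y)) :
    ∃ s : V →ₗ[F] M, (∀ x, θ (s x) = x) ∧ ∀ (k : K) (x : V), s (τ k x) = σ k (s x) := by
  obtain ⟨s₀, hs₀⟩ := θ.exists_rightInverse_of_surjective (LinearMap.range_eq_top.mpr hθ)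
  set c : F := (Fintype.card K : F)⁻¹ with hc
  set s : V →ₗ[F] M := c • ∑ k : K, (σ k) ∘ₗ s₀ ∘ₗ (τ k⁻¹) with hs
  have hsapp : ∀ x, s x = c • ∑ k : K, σ k (s₀ (τ k⁻¹ x)) := by
    intro x
    simp [hs, LinearMap.sum_apply]
  have hτmul : ∀ (a b : K) (x : V), τ a (τ b x) = τ (a * b) x := by
    intro a b x; rw [map_mul]; rfl
  have hσmul : ∀ (a b : K) (x : M), σ a (σ b x) = σ (a * b) x := by
    intro a b x; rw [map_mul]; rfl
  have hs₀θ : ∀ x, θ (s₀ x) = x := fun x => LinearMap.congr_fun hs₀ x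
  refine ⟨s, ?_, ?_⟩
  · intro x
    rw [hsapp, map_smul, map_sum]
    have : ∀ k : K, θ (σ k (s₀ (τ k⁻¹ x))) = x := by
      intro k
      rw [hθe, hs₀θ, hτmul, mul_inv_cancel, map_one]
      rfl
    simp only [this, Finset.sum_const, Finset.card_univ, ← Nat.cast_smul_eq_nsmul F]
    rw [smul_smul, hc, inv_mul_cancel₀ hK, one_smul]
  · intro k₀ x
    rw [hsapp, hsapp, map_smul]
    congr 1
    rw [map_sum]
    refine Fintype.sum_equiv (Equiv.mulLeft k₀⁻¹) _ _ ?_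
    intro k
    simp only [Equiv.coe_mulLeft]
    rw [hτmul, hσmul]
    have e1 : k₀ * (k₀⁻¹ * k) = k := by group
    have e2 : (k₀⁻¹ * k)⁻¹ = k⁻¹ * k₀ := by group
    rw [e1, e2]

/-- Finiteness of quotients by kernels of maps into finite groups. -/
lemma finite_quot_ker {K P : Type} [Group K] [Group P] [Finite P] (ψ : K →* P) :
    Finite (K ⧸ ψ.ker) :=
  Finite.of_equiv _ (QuotientGroup.quotientKerEquivRange ψ).toEquiv.symm

/-- If the characteristic does not divide the order of an overgroup of the range,
then the cardinality of the quotient by the kernel is invertible in `F`. -/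
lemma card_quot_ne_zero {K P : Type} [Group K] [Group P] [Finite P]
    (ψ : K →* P) (R : Subgroup P) (hle : ψ.range ≤ R)
    (h : ¬ (ringChar F ∣ Nat.card R)) :
    (Nat.card (K ⧸ ψ.ker) : F) ≠ 0 := by
  intro h0
  apply h
  have e : Nat.card (K ⧸ ψ.ker) = Nat.card ψ.range :=
    Nat.card_congr (QuotientGroup.quotientKerEquivRange ψ).toEquiv
  have hd : Nat.card ψ.range ∣ Nat.card R := Subgroup.card_dvd_of_le hle
  have hdiv : ringChar F ∣ Nat.card (K ⧸ ψ.ker) :=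
    (CharP.cast_eq_zero_iff F (ringChar F) _).mp h0
  exact dvd_trans (e ▸ hdiv) hd

end MaschkeAux

section TreeAux

variable {X : ℕ → Type} [∀ i, Fintype (X i)] [∀ i, DecidableEq (X i)] {G : Type} [Group G]
variable {F : Type} [Field F]

lemma mem_stab {A : TreeAction X G} {n : ℕ} {v : Vert X n} {g : G} :
    g ∈ stab A v ↔ A.ρ n g v = v := Iff.rfl

lemma rho_inv_apply (A : TreeAction X G) {n : ℕ} (g : G) (w : Vert X n) :
    A.ρ n g (A.ρ n g⁻¹ w) = w := by
  rw [← Equiv.Perm.mul_apply, ← map_mul, mul_inv_cancel, map_one]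
  rfl

/-- Extend a vertex of level `n` to a child, using a chosen element of `X n`. -/
def extendV {n : ℕ} (u : Vert X n) (x₀ : X n) : Vert X (n + 1) :=
  fun i => if h : (i : ℕ) < n then u ⟨i, h⟩
    else cast (congrArg X (Nat.eq_of_lt_succ_of_not_lt i.isLt h)).symm x₀

lemma pred_extendV {n : ℕ} (u : Vert X n) (x₀ : X n) : pred (extendV u x₀) = u := by
  funext i
  show extendV u x₀ i.castSucc = u i
  have h : ((i.castSucc : Fin (n + 1)) : ℕ) < n := i.isLt
  simp only [extendV, dif_pos h]
  rfl

lemma descRep_apply {A : TreeAction X G} {n : ℕ} {v : Vert X n}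
    (s : stab A v) (z : Desc X v →₀ F) :
    descRep F A v s z = Finsupp.mapDomain (fun w => descPermHom A v s w) z := by
  rfl

lemma descRep_single {A : TreeAction X G} {n : ℕ} {v : Vert X n}
    (s : stab A v) (w : Desc X v) (r : F) :
    descRep F A v s (Finsupp.single w r) = Finsupp.single (descPermHom A v s w) r := by
  rw [descRep_apply, Finsupp.mapDomain_single]

lemma descPerm_of_level {A : TreeAction X G} {n : ℕ} {v : Vert X n}
    (t : stab A v) (ht : A.ρ (n + 1) t.1 = 1) : descPermHom A v t = 1 := by
  apply Equiv.ext
  intro w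
  apply Subtype.ext
  show A.ρ (n + 1) t.1 w.1 = ((1 : Equiv.Perm (Desc X v)) w).1
  rw [ht]
  rfl

lemma descRep_of_level {A : TreeAction X G} {n : ℕ} {v : Vert X n}
    (t : stab A v) (ht : A.ρ (n + 1) t.1 = 1) (z : Desc X v →₀ F) :
    descRep F A v t z = z := by
  rw [descRep_apply]
  have : (fun w => descPermHom A v t w) = id := by
    funext w
    rw [descPerm_of_level t ht]
    rfl
  rw [this, Finsupp.mapDomain_id]

lemma pi_of_level {A : TreeAction X G} {n : ℕ} {v : Vert X n}
    {V : Type} [AddCommGroup V] [Module F V] (π : Representation F (stab A v) V)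
    (j : V →ₗ[F] (Desc X v →₀ F)) (hjinj : Function.Injective j)
    (hjeq : ∀ (g : stab A v) (x : V), j (π g x) = descRep F A v g (j x))
    (t : stab A v) (ht : A.ρ (n + 1) t.1 = 1) (x : V) : π t x = x := by
  apply hjinj
  rw [hjeq, descRep_of_level t ht]

lemma ker_fix {A : TreeAction X G} {n : ℕ} (x₀ : X n) {g : G}
    (hg : A.ρ (n + 1) g = 1) (u : Vert X n) : A.ρ n g u = u := by
  have h := A.compat n g (extendV u x₀)
  rw [hg] at h
  simp only [Equiv.Perm.coe_one, id_eq] at h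
  rw [pred_extendV] at h
  exact h.symm

lemma js_sum_zero {A : TreeAction X G} {n : ℕ} {v : Vert X n}
    {V : Type} [AddCommGroup V] [Module F V] (π : Representation F (stab A v) V)
    (hirr : π.IsIrred) (hnt : ¬ π.IsTriv)
    (j : V →ₗ[F] (Desc X v →₀ F))
    (hjeq : ∀ (g : stab A v) (x : V), j (π g x) = descRep F A v g (j x)) :
    ∀ x : V, Finsupp.linearCombination F (fun _ : Desc X v => (1 : F)) (j x) = 0 := by
  set L : V →ₗ[F] F :=
    (Finsupp.linearCombination F (fun _ : Desc X v => (1 : F))) ∘ₗ j with hL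
  have hinvL : ∀ (s : stab A v) (x : V), L (π s x) = L x := by
    intro s x
    simp only [hL, LinearMap.comp_apply]
    rw [hjeq, descRep_apply, Finsupp.linearCombination_mapDomain]
    rfl
  have hker : ∀ (s : stab A v), ∀ x ∈ LinearMap.ker L, π s x ∈ LinearMap.ker L := by
    intro s x hx
    rw [LinearMap.mem_ker] at *
    rw [hinvL]
    exact hx
  rcases hirr.2 (LinearMap.ker L) hker with hbot | htop
  · exfalso
    apply hnt
    intro s x
    have h1 : L (π s x - x) = 0 := by rw [map_sub, hinvL, sub_self]
    have h2 : π s x - x ∈ LinearMap.ker L := h1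
    rw [hbot, Submodule.mem_bot, sub_eq_zero] at h2
    exact h2
  · intro x
    have : x ∈ LinearMap.ker L := htop ▸ Submodule.mem_top
    exact this

end TreeAux

section KeyVanish

variable {X : ℕ → Type} [∀ i, Fintype (X i)] [∀ i, DecidableEq (X i)] {G : Type} [Group G]
variable {F : Type} [Field F]

set_option maxHeartbeats 1000000 in
/-- The key vanishing lemma: an intertwiner between `π` and a conjugate of `π`
over the stabiliser of two distinct vertices vanishes. -/
lemma key_vanish {A : TreeAction X G} (h2 : LocTwoTrans A)
    (hchar : ∀ m : ℕ, ¬ (ringChar F ∣ Nat.card (A.ρ m).range))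
    {n : ℕ} {v : Vert X n} {V : Type} [AddCommGroup V] [Module F V]
    (π : Representation F (stab A v) V)
    (hirr : π.IsIrred) (hnt : ¬ π.IsTriv)
    (j : V →ₗ[F] (Desc X v →₀ F)) (hjinj : Function.Injective j)
    (hjeq : ∀ (g : stab A v) (x : V), j (π g x) = descRep F A v g (j x))
    (x₀ : X n)
    (g : G) (hg : g ∉ stab A v) (φ : V →ₗ[F] V)
    (hφ : ∀ (t : G) (ht1 : t ∈ stab A v) (_ht2 : t ∈ stab A (A.ρ n g⁻¹ v))
      (ht3 : g * t * g⁻¹ ∈ stab A v) (x : V),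
      φ (π ⟨t, ht1⟩ x) = π ⟨g * t * g⁻¹, ht3⟩ (φ x)) :
    φ = 0 := by
  classical
  set u : Vert X n := A.ρ n g⁻¹ v with hu
  have hvu : v ≠ u := by
    intro h
    apply hg
    rw [mem_stab]
    calc A.ρ n g v = A.ρ n g u := by rw [← h]
    _ = v := by rw [hu]; exact rho_inv_apply A g v
  set Hs : Subgroup G := stab A v ⊓ stab A u with hHs
  have memv : ∀ k : Hs, k.1 ∈ stab A v := fun k => (Subgroup.mem_inf.mp k.2).1
  have memu : ∀ k : Hs, A.ρ n k.1 u = u := fun k => (Subgroup.mem_inf.mp k.2).2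
  have hgu : A.ρ n g u = v := by rw [hu]; exact rho_inv_apply A g v
  have hconj : ∀ k : Hs, g * k.1 * g⁻¹ ∈ stab A v := by
    intro k
    rw [mem_stab, map_mul, map_mul, Equiv.Perm.mul_apply, Equiv.Perm.mul_apply]
    rw [show A.ρ n g⁻¹ v = u from rfl, memu k, hgu]
  set incl : Hs →* stab A v := Subgroup.inclusion inf_le_left with hincl
  set ψ : Hs →* Equiv.Perm (Vert X (n + 1)) := (A.ρ (n + 1)).comp Hs.subtype with hψ
  set σK : Representation F Hs (Desc X v →₀ F) := (descRep F A v).comp incl with hσK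
  set τK : Representation F Hs V := π.comp incl with hτK
  have hψval : ∀ k : Hs, ψ k = A.ρ (n + 1) k.1 := fun k => rfl
  have hσker : ψ.ker ≤ σK.ker := by
    intro t ht
    rw [MonoidHom.mem_ker] at *
    apply LinearMap.ext
    intro z
    exact descRep_of_level (incl t) ht z
  have hτker : ψ.ker ≤ τK.ker := by
    intro t ht
    rw [MonoidHom.mem_ker] at *
    apply LinearMap.ext
    intro x
    exact pi_of_level π j hjinj hjeq (incl t) ht x
  haveI : Finite (Hs ⧸ ψ.ker) := finite_quot_ker ψ
  haveI : Fintype (Hs ⧸ ψ.ker) := Fintype.ofFinite _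
  have hcard : ((Fintype.card (Hs ⧸ ψ.ker) : ℕ) : F) ≠ 0 := by
    rw [← Nat.card_eq_fintype_card]
    refine card_quot_ne_zero ψ (A.ρ (n + 1)).range ?_ (hchar (n + 1))
    rintro p ⟨k, rfl⟩
    exact ⟨k.1, rfl⟩
  set σQ : Representation F (Hs ⧸ ψ.ker) (Desc X v →₀ F) :=
    QuotientGroup.lift ψ.ker σK hσker with hσQ
  set τQ : Representation F (Hs ⧸ ψ.ker) V := QuotientGroup.lift ψ.ker τK hτker with hτQ
  have hjeqQ : ∀ (q : Hs ⧸ ψ.ker) (x : V), j (τQ q x) = σQ q (j x) := by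
    intro q x
    refine QuotientGroup.induction_on q ?_
    intro k
    exact hjeq (incl k) x
  obtain ⟨P, hPj, hPeq⟩ := maschke_retraction hcard σQ τQ j hjinj hjeqQ
  have hPeqK : ∀ (k : Hs) (y : Desc X v →₀ F),
      P (descRep F A v (incl k) y) = π (incl k) (P y) := by
    intro k y
    exact hPeq ((k : Hs) : Hs ⧸ ψ.ker) y
  -- relabelling of descendants
  have hpredrel : ∀ w : Desc X v, pred (A.ρ (n + 1) g⁻¹ w.1) = u := by
    intro w
    rw [A.compat, w.2]
  set relabel : Desc X v → Desc X u := fun w => ⟨A.ρ (n + 1) g⁻¹ w.1, hpredrel w⟩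
    with hrelabel
  have hrel_inj : Function.Injective relabel := by
    intro a b h
    apply Subtype.ext
    exact (A.ρ (n + 1) g⁻¹).injective (congrArg Subtype.val h)
  set j' : V →ₗ[F] (Desc X u →₀ F) := (Finsupp.lmapDomain F F relabel) ∘ₗ j with hj'
  have hj'inj : Function.Injective j' := by
    intro a b h
    apply hjinj
    exact Finsupp.mapDomain_injective hrel_inj h
  have hpredact : ∀ (k : Hs) (w : Desc X u), pred (A.ρ (n + 1) k.1 w.1) = u := by
    intro k w
    rw [A.compat, w.2]
    exact memu k
  set actU : Hs → Desc X u → Desc X u := fun k w => ⟨A.ρ (n + 1) k.1 w.1, hpredact k w⟩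
    with hactU
  have hactU_inj : ∀ k : Hs, Function.Injective (actU k) := by
    intro k a b h
    apply Subtype.ext
    exact (A.ρ (n + 1) k.1).injective (congrArg Subtype.val h)
  set Φ : (Desc X v →₀ F) →ₗ[F] (Desc X u →₀ F) := j' ∘ₗ φ ∘ₗ P with hΦ
  have hrel_conj : ∀ (k : Hs) (w : Desc X v),
      relabel (descPermHom A v ⟨g * k.1 * g⁻¹, hconj k⟩ w) = actU k (relabel w) := by
    intro k w
    apply Subtype.ext
    show A.ρ (n + 1) g⁻¹ (A.ρ (n + 1) (g * k.1 * g⁻¹) w.1)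
      = A.ρ (n + 1) k.1 (A.ρ (n + 1) g⁻¹ w.1)
    rw [← Equiv.Perm.mul_apply, ← map_mul, ← Equiv.Perm.mul_apply, ← map_mul]
    have : g⁻¹ * (g * k.1 * g⁻¹) = k.1 * g⁻¹ := by group
    rw [this]
  have hC1 : ∀ (k : Hs) (z : Desc X v →₀ F),
      Φ (descRep F A v (incl k) z) = Finsupp.mapDomain (actU k) (Φ z) := by
    intro k z
    show j' (φ (P (descRep F A v (incl k) z))) = _
    rw [hPeqK]
    have h1 : φ (π (incl k) (P z)) = π ⟨g * k.1 * g⁻¹, hconj k⟩ (φ (P z)) :=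
      hφ k.1 (memv k) (memu k) (hconj k) (P z)
    rw [h1]
    show Finsupp.lmapDomain F F relabel (j (π ⟨g * k.1 * g⁻¹, hconj k⟩ (φ (P z)))) = _
    rw [hjeq, descRep_apply, Finsupp.lmapDomain_apply, ← Finsupp.mapDomain_comp]
    have hfun : (relabel ∘ fun w => descPermHom A v ⟨g * k.1 * g⁻¹, hconj k⟩ w)
        = actU k ∘ relabel := by
      funext w
      exact hrel_conj k w
    rw [hfun, Finsupp.mapDomain_comp]
    rfl
  set a : Desc X u → Desc X v → F := fun w' w => Φ (Finsupp.single w 1) w' with ha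
  have hC2 : ∀ (k : Hs) (w' : Desc X u) (w : Desc X v),
      a (actU k w') (descPermHom A v (incl k) w) = a w' w := by
    intro k w' w
    show Φ (Finsupp.single (descPermHom A v (incl k) w) 1) (actU k w')
      = Φ (Finsupp.single w 1) w'
    rw [← descRep_single (incl k) w (1 : F), hC1,
      Finsupp.mapDomain_apply (hactU_inj k)]
  have hC3 : ∀ (w₁ w₂ : Desc X v) (w₁' w₂' : Desc X u), ∃ k : Hs,
      descPermHom A v (incl k) w₁ = w₂ ∧ actU k w₁' = w₂' := by
    intro w₁ w₂ w₁' w₂'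
    obtain ⟨t, htv, htu, ht1, ht2⟩ :=
      h2.2 n v u hvu w₁.1 w₂.1 w₁'.1 w₂'.1 w₁.2 w₂.2 w₁'.2 w₂'.2
    exact ⟨⟨t, Subgroup.mem_inf.mpr ⟨mem_stab.mpr htv, mem_stab.mpr htu⟩⟩,
      Subtype.ext ht1, Subtype.ext ht2⟩
  haveI : Finite (Desc X u) := Subtype.finite
  haveI : Fintype (Desc X u) := Fintype.ofFinite _
  set w₀ : Desc X v := ⟨extendV v x₀, pred_extendV v x₀⟩ with hw₀
  set w₀' : Desc X u := ⟨extendV u x₀, pred_extendV u x₀⟩ with hw₀'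
  set c : F := a w₀' w₀ with hcdef
  have hconst : ∀ (w' : Desc X u) (w : Desc X v), a w' w = c := by
    intro w' w
    obtain ⟨k, h1, h2⟩ := hC3 w₀ w w₀' w'
    rw [← h1, ← h2, hC2]
  set Uall : Desc X u →₀ F := ∑ w' : Desc X u, Finsupp.single w' c with hUall
  have hΦz : ∀ z : Desc X v →₀ F,
      Φ z = (Finsupp.linearCombination F (fun _ : Desc X v => (1 : F)) z) • Uall := by
    intro z
    induction z using Finsupp.induction_linear with
    | zero => simp
    | add f g hf hg => rw [map_add, hf, hg, map_add, add_smul]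
    | single w r =>
      rw [Finsupp.linearCombination_single, smul_eq_mul, mul_one]
      have hsm : Finsupp.single w r = r • Finsupp.single w (1 : F) := by
        rw [Finsupp.smul_single, smul_eq_mul, mul_one]
      rw [hsm, map_smul]
      congr 1
      ext w'
      rw [show (Φ (Finsupp.single w 1)) w' = c from hconst w' w, hUall,
        Finsupp.finset_sum_apply]
      simp [Finsupp.single_apply]
  have hzero : ∀ x : V, Φ (j x) = 0 := by
    intro x
    rw [hΦz, js_sum_zero π hirr hnt j hjeq x, zero_smul]
  apply LinearMap.ext
  intro x
  have h1 : Φ (j x) = j' (φ x) := by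
    show j' (φ (P (j x))) = j' (φ x)
    rw [hPj]
  apply hj'inj
  rw [← h1, hzero]
  simp

end KeyVanish

set_option maxHeartbeats 4000000 in
set_option synthInstance.maxHeartbeats 400000 in
/-- If `G` acts locally 2-transitively on the tree and `char F` does not divide the
Steinitz order of the closure of `G` (i.e. the order of any of the finite images of
the level actions), then for every nontrivial irreducible representation `π` of the
stabiliser of a vertex `v` occurring in the permutation module `F[D(v)]`, the
induced representation `Ind_{St(v)}^G π` is irreducible. -/
theorem stmt_9 {X : ℕ → Type} [∀ i, Fintype (X i)] {G : Type} [Group G]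
    (A : TreeAction X G) (F : Type) [Field F]
    (hchar : ∀ n : ℕ, ¬ (ringChar F ∣ Nat.card (A.ρ n).range))
    (h2 : LocTwoTrans A) {n : ℕ} (v : Vert X n)
    (V : Type) [AddCommGroup V] [Module F V]
    (π : Representation F (stab A v) V)
    (hirr : π.IsIrred) (hnt : ¬ π.IsTriv)
    (hocc : π.OccursIn (descRep F A v)) :
    (IndRep (stab A v) π).IsIrred := by
  classical
  obtain ⟨j, hjinj, hjeq⟩ := hocc
  haveI hVnt : Nontrivial V := hirr.1
  -- the branching at level `n` is nonempty
  have hXn : Nonempty (X n) := by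
    by_contra hempty
    rw [not_nonempty_iff] at hempty
    have hsub : ∀ x y : V, x = y := by
      intro x y
      apply hjinj
      ext w
      exact (hempty.false (w.1 ⟨n, Nat.lt_succ_self n⟩)).elim
    obtain ⟨x, y, hxy⟩ := hVnt
    exact hxy (hsub x y)
  obtain ⟨x₀⟩ := hXn
  -- nontriviality of the induced representation
  have hnontriv : Nontrivial ↥(IndCarrier (stab A v) π) := by
    obtain ⟨xne, hxne⟩ := exists_ne (0 : V)
    set f₀ : G → V := fun y => if h : y ∈ stab A v then π ⟨y, h⟩ xne else 0 with hf₀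
    have hmem : f₀ ∈ IndCarrier (stab A v) π := by
      intro s x
      by_cases h : x ∈ stab A v
      · have hsx : (s : G) * x ∈ stab A v := mul_mem s.2 h
        show f₀ ((s : G) * x) = π s (f₀ x)
        rw [hf₀]
        simp only
        rw [dif_pos hsx, dif_pos h]
        rw [show (⟨(s : G) * x, hsx⟩ : stab A v) = s * ⟨x, h⟩ from rfl, map_mul]
        rfl
      · have hsx : (s : G) * x ∉ stab A v := by
          intro hc
          apply h
          have hx : x = (s : G)⁻¹ * ((s : G) * x) := by group
          rw [hx]
          exact mul_mem (inv_mem s.2) hc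
        show f₀ ((s : G) * x) = π s (f₀ x)
        rw [hf₀]
        simp only
        rw [dif_neg hsx, dif_neg h, map_zero]
    refine ⟨⟨⟨f₀, hmem⟩, 0, ?_⟩⟩
    intro hc
    have h1 : f₀ 1 = 0 := by
      have h2 := congrArg Subtype.val hc
      exact congrFun h2 1
    rw [hf₀] at h1
    simp only [dif_pos (one_mem (stab A v))] at h1
    rw [show (⟨(1 : G), one_mem _⟩ : stab A v) = 1 from rfl, map_one,
      Module.End.one_apply] at h1
    exact hxne h1
  refine ⟨hnontriv, ?_⟩
  intro W hWinv
  rcases eq_or_ne W ⊥ with hbot | hne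
  · exact Or.inl hbot
  right
  rw [Submodule.ne_bot_iff] at hne
  obtain ⟨f₁, hf₁W, hf₁0⟩ := hne
  set ρI := IndRep (stab A v) π with hρI
  set evalmap : ↥(IndCarrier (stab A v) π) →ₗ[F] V :=
    (LinearMap.proj (1 : G)).comp (IndCarrier (stab A v) π).subtype with hevalmap
  have hevalρ : ∀ (y : G) (fw : ↥(IndCarrier (stab A v) π)),
      evalmap (ρI y fw) = fw.1 y := by
    intro y fw
    show (ρI y fw).1 1 = fw.1 y
    rw [show (ρI y fw).1 1 = fw.1 (1 * y) from rfl, one_mul]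
  set E : Submodule F V := W.map evalmap with hE
  have hEinv : ∀ s : stab A v, ∀ x ∈ E, π s x ∈ E := by
    rintro s x ⟨fw, hfw, rfl⟩
    refine ⟨ρI (s : G) fw, hWinv (s : G) fw hfw, ?_⟩
    rw [hevalρ]
    have h2 := fw.2 s 1
    rw [mul_one] at h2
    rw [h2]
    rfl
  have hEne : E ≠ ⊥ := by
    have hfy : ∃ y : G, f₁.1 y ≠ 0 := by
      by_contra hcon
      push_neg at hcon
      apply hf₁0
      apply Subtype.ext
      funext y
      exact hcon y
    obtain ⟨y, hy⟩ := hfy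
    rw [Submodule.ne_bot_iff]
    exact ⟨f₁.1 y, ⟨ρI y f₁, hWinv y f₁ hf₁W, hevalρ y f₁⟩, hy⟩
  have hEtop : E = ⊤ := by
    rcases hirr.2 E hEinv with h | h
    · exact absurd h hEne
    · exact h
  -- the representation of the stabiliser on W
  set σW : Representation F (stab A v) ↥W :=
    { toFun := fun k => (ρI (k : G)).restrict (fun x hx => hWinv (k : G) x hx)
      map_one' := by
        apply LinearMap.ext
        intro x
        apply Subtype.ext
        show (ρI ((1 : stab A v) : G)) x.1 = x.1
        rw [OneMemClass.coe_one, map_one]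
        rfl
      map_mul' := by
        intro k l
        apply LinearMap.ext
        intro x
        apply Subtype.ext
        show (ρI ((k * l : stab A v) : G)) x.1 = (ρI (k : G)) ((ρI (l : G)) x.1)
        rw [show ((k * l : stab A v) : G) = (k : G) * (l : G) from rfl, map_mul]
        rfl } with hσW
  -- translation by elements acting trivially on level n+1 is trivial on Ind
  have hIndKer : ∀ (t : G), A.ρ (n + 1) t = 1 →
      ∀ (f : ↥(IndCarrier (stab A v) π)) (y : G), f.1 (y * t) = f.1 y := by
    intro t ht f y
    have hconjker : A.ρ (n + 1) (y * t * y⁻¹) = 1 := by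
      rw [map_mul, map_mul, ht, mul_one, ← map_mul, mul_inv_cancel, map_one]
    have hmem : y * t * y⁻¹ ∈ stab A v := mem_stab.mpr (ker_fix x₀ hconjker v)
    have hrw : y * t = (y * t * y⁻¹) * y := by group
    rw [hrw]
    calc f.1 ((y * t * y⁻¹) * y) = π ⟨y * t * y⁻¹, hmem⟩ (f.1 y) := f.2 ⟨_, hmem⟩ y
    _ = f.1 y := pi_of_level π j hjinj hjeq _ hconjker _
  set ψS : (stab A v) →* Equiv.Perm (Vert X (n + 1)) :=
    (A.ρ (n + 1)).comp (stab A v).subtype with hψS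
  have hσWker : ψS.ker ≤ σW.ker := by
    intro t ht
    rw [MonoidHom.mem_ker] at *
    apply LinearMap.ext
    intro x
    apply Subtype.ext
    show (ρI (t : G)) x.1 = x.1
    apply Subtype.ext
    funext y
    exact hIndKer t.1 ht x.1 y
  have hπker : ψS.ker ≤ π.ker := by
    intro t ht
    rw [MonoidHom.mem_ker] at *
    apply LinearMap.ext
    intro x
    exact pi_of_level π j hjinj hjeq t ht x
  haveI : Finite ((stab A v) ⧸ ψS.ker) := finite_quot_ker ψS
  haveI : Fintype ((stab A v) ⧸ ψS.ker) := Fintype.ofFinite _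
  have hcardS : ((Fintype.card ((stab A v) ⧸ ψS.ker) : ℕ) : F) ≠ 0 := by
    rw [← Nat.card_eq_fintype_card]
    refine card_quot_ne_zero ψS (A.ρ (n + 1)).range ?_ (hchar (n + 1))
    rintro p ⟨k, rfl⟩
    exact ⟨k.1, rfl⟩
  set σWQ := QuotientGroup.lift ψS.ker σW hσWker with hσWQ
  set πQ := QuotientGroup.lift ψS.ker π hπker with hπQ
  set θ : ↥W →ₗ[F] V := evalmap.comp W.subtype with hθ
  have hθval : ∀ fw : ↥W, θ fw = fw.1.1 1 := fun fw => rfl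
  have hθsurj : Function.Surjective θ := by
    intro x
    have hx : x ∈ E := by rw [hEtop]; exact Submodule.mem_top
    obtain ⟨fw, hfw, hfx⟩ := hx
    exact ⟨⟨fw, hfw⟩, hfx⟩
  have hθeq : ∀ (q : (stab A v) ⧸ ψS.ker) (fw : ↥W), θ (σWQ q fw) = πQ q (θ fw) := by
    intro q fw
    refine QuotientGroup.induction_on q ?_
    intro k
    show θ (σW k fw) = π k (θ fw)
    rw [hθval, hθval]
    show (ρI (k : G) fw.1).1 1 = π k (fw.1.1 1)
    rw [show (ρI (k : G) fw.1).1 1 = fw.1.1 (1 * (k : G)) from rfl, one_mul]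
    have h2 := fw.1.2 k 1
    rwa [mul_one] at h2
  obtain ⟨sV, hθs, hseqQ⟩ := maschke_section (M := ↥W) hcardS σWQ πQ θ hθsurj hθeq
  have hseqK : ∀ (k : stab A v) (x : V), sV (π k x) = σW k (sV x) := by
    intro k x
    exact hseqQ ((k : stab A v) : (stab A v) ⧸ ψS.ker) x
  have hs1 : ∀ x : V, (sV x).1.1 1 = x := by
    intro x
    have := hθs x
    rwa [hθval] at this
  have hsd : ∀ (k : stab A v) (x : V) (y : G),
      (sV (π k x)).1.1 y = (sV x).1.1 (y * (k : G)) := by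
    intro k x y
    rw [hseqK]
    rfl
  -- vanishing off the stabiliser
  have hvan : ∀ (gg : G), gg ∉ stab A v → ∀ x : V, (sV x).1.1 gg = 0 := by
    intro gg hgg
    set φg : V →ₗ[F] V :=
      (LinearMap.proj gg).comp
        ((IndCarrier (stab A v) π).subtype.comp (W.subtype.comp sV)) with hφg
    have hφprop : ∀ (t : G) (ht1 : t ∈ stab A v) (_ht2 : t ∈ stab A (A.ρ n gg⁻¹ v))
        (ht3 : gg * t * gg⁻¹ ∈ stab A v) (x : V),
        φg (π ⟨t, ht1⟩ x) = π ⟨gg * t * gg⁻¹, ht3⟩ (φg x) := by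
      intro t ht1 ht2 ht3 x
      show (sV (π ⟨t, ht1⟩ x)).1.1 gg = π ⟨gg * t * gg⁻¹, ht3⟩ ((sV x).1.1 gg)
      have hrw : gg * t = (gg * t * gg⁻¹) * gg := by group
      calc (sV (π ⟨t, ht1⟩ x)).1.1 gg = (sV x).1.1 (gg * t) := hsd ⟨t, ht1⟩ x gg
      _ = (sV x).1.1 ((gg * t * gg⁻¹) * gg) := by rw [← hrw]
      _ = π ⟨gg * t * gg⁻¹, ht3⟩ ((sV x).1.1 gg) := (sV x).1.2 ⟨gg * t * gg⁻¹, ht3⟩ gg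
    have hzero := key_vanish h2 hchar π hirr hnt j hjinj hjeq x₀ gg hgg φg hφprop
    intro x
    exact LinearMap.congr_fun hzero x
  -- every element of the induced module lies in W
  rw [Submodule.eq_top_iff']
  intro f
  choose gsel hgsel using fun w : Vert X n => h2.1 n v w
  have key : ∀ y : G,
      (∑ w : Vert X n, (sV (f.1 ((gsel w)⁻¹))).1.1 (y * gsel w)) = f.1 y := by
    intro y
    have hy : A.ρ n y⁻¹ v ∈ (Finset.univ : Finset (Vert X n)) := Finset.mem_univ _
    have hside : ∀ w ∈ (Finset.univ : Finset (Vert X n)), w ≠ A.ρ n y⁻¹ v →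
        (sV (f.1 ((gsel w)⁻¹))).1.1 (y * gsel w) = 0 := by
      intro w _ hw
      apply hvan
      intro hc
      apply hw
      rw [mem_stab, map_mul, Equiv.Perm.mul_apply, hgsel w] at hc
      have h4 := congrArg (A.ρ n y⁻¹) hc
      rw [← Equiv.Perm.mul_apply, ← map_mul, inv_mul_cancel, map_one] at h4
      simpa using h4
    rw [Finset.sum_eq_single_of_mem _ hy hside]
    have hmem : y * gsel (A.ρ n y⁻¹ v) ∈ stab A v := by
      rw [mem_stab, map_mul, Equiv.Perm.mul_apply, hgsel]
      exact rho_inv_apply A y v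
    have h1 : (sV (f.1 ((gsel (A.ρ n y⁻¹ v))⁻¹))).1.1 (y * gsel (A.ρ n y⁻¹ v))
        = π ⟨y * gsel (A.ρ n y⁻¹ v), hmem⟩ (f.1 ((gsel (A.ρ n y⁻¹ v))⁻¹)) := by
      have h2 := (sV (f.1 ((gsel (A.ρ n y⁻¹ v))⁻¹))).1.2 ⟨_, hmem⟩ 1
      rw [mul_one] at h2
      rw [h2, hs1]
    rw [h1, ← f.2 ⟨_, hmem⟩ ((gsel (A.ρ n y⁻¹ v))⁻¹)]
    have harg : ((⟨y * gsel (A.ρ n y⁻¹ v), hmem⟩ : stab A v) : G)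
        * (gsel (A.ρ n y⁻¹ v))⁻¹ = y := by
      show (y * gsel (A.ρ n y⁻¹ v)) * (gsel (A.ρ n y⁻¹ v))⁻¹ = y
      group
    rw [harg]
  have hsum : f = ∑ w : Vert X n, ρI (gsel w) ⟨(sV (f.1 ((gsel w)⁻¹))).1.1,
      (sV (f.1 ((gsel w)⁻¹))).1.2⟩ := by
    apply Subtype.ext
    funext y
    rw [show ((∑ w : Vert X n, ρI (gsel w) ⟨(sV (f.1 ((gsel w)⁻¹))).1.1,
        (sV (f.1 ((gsel w)⁻¹))).1.2⟩ : ↥(IndCarrier (stab A v) π)) : G → V)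
      = ∑ w : Vert X n, ((ρI (gsel w) ⟨(sV (f.1 ((gsel w)⁻¹))).1.1,
        (sV (f.1 ((gsel w)⁻¹))).1.2⟩ : ↥(IndCarrier (stab A v) π)) : G → V) from
        map_sum ((IndCarrier (stab A v) π).subtype) _ Finset.univ]
    rw [Finset.sum_apply]
    exact (key y).symm
  rw [hsum]
  refine Submodule.sum_mem W ?_
  intro w _
  exact hWinv (gsel w) _ (sV (f.1 ((gsel w)⁻¹))).2
end

section
/- Let H be a finite group acting transitively on a finite set X, and suppose H contains an abelian subgroup A that acts transitively on X. Then the complex permutation representation of H on ℂ[X] is multiplicity-free. -/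
open Module

/-- A set of commuting endomorphisms of a nonzero finite-dimensional complex vector
space has a simultaneous eigenvector. -/
lemma simul_eigenvector : ∀ (n : ℕ) (V : Type) [AddCommGroup V] [Module ℂ V]
    [FiniteDimensional ℂ V] [Nontrivial V], Module.finrank ℂ V ≤ n →
    ∀ (S : Set (Module.End ℂ V)), (∀ T ∈ S, ∀ T' ∈ S, Commute T T') →
    ∃ v : V, v ≠ 0 ∧ ∀ T ∈ S, ∃ μ : ℂ, T v = μ • v := by
  intro n
  induction n with
  | zero =>
    intro V _ _ _ _ hn S hS
    have := Module.finrank_pos (R := ℂ) (M := V)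
    omega
  | succ n ih =>
    intro V _ _ _ _ hn S hS
    by_cases h : ∃ T ∈ S, ∃ μ : ℂ, T.eigenspace μ ≠ ⊥ ∧ T.eigenspace μ ≠ ⊤
    · obtain ⟨T₀, hT₀S, μ₀, hbot, htop⟩ := h
      set E := T₀.eigenspace μ₀ with hE
      have hmap : ∀ T ∈ S, ∀ x ∈ E, T x ∈ E := by
        intro T hT x hx
        rw [Module.End.mem_eigenspace_iff] at hx ⊢
        have hc := hS T hT T₀ hT₀S
        calc T₀ (T x) = T (T₀ x) := by
              have := congrArg (fun f => f x) hc.symm.eq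
              simpa using this
          _ = μ₀ • T x := by rw [hx, map_smul]
      haveI : Nontrivial E := Submodule.nontrivial_iff_ne_bot.mpr hbot
      have hlt : Module.finrank ℂ E < Module.finrank ℂ V := Submodule.finrank_lt htop
      have hle : Module.finrank ℂ E ≤ n := by omega
      set S' : Set (Module.End ℂ E) :=
        {g | ∃ T : Module.End ℂ V, ∃ hT : T ∈ S, g = LinearMap.restrict T (hmap T hT)}
      have hS' : ∀ g ∈ S', ∀ g' ∈ S', Commute g g' := by
        rintro g ⟨T, hT, rfl⟩ g' ⟨T', hT', rfl⟩
        have hc := hS T hT T' hT'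
        apply LinearMap.ext
        intro x
        apply Subtype.ext
        have := congrArg (fun f => f (x : V)) hc.eq
        simpa [LinearMap.restrict_apply] using this
      obtain ⟨v, hv0, hv⟩ := ih E hle S' hS'
      refine ⟨(v : V), by simpa using hv0, ?_⟩
      intro T hT
      obtain ⟨μ, hμ⟩ := hv (LinearMap.restrict T (hmap T hT)) ⟨T, hT, rfl⟩
      exact ⟨μ, by simpa [LinearMap.restrict_apply] using congrArg (Subtype.val) hμ⟩
    · push_neg at h
      obtain ⟨v, hv⟩ := exists_ne (0 : V)
      refine ⟨v, hv, ?_⟩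
      intro T hT
      obtain ⟨μ, hμ⟩ := Module.End.exists_eigenvalue T
      have : T.eigenspace μ = ⊤ := h T hT μ hμ
      exact ⟨μ, Module.End.mem_eigenspace_iff.mp (this ▸ Submodule.mem_top)⟩

/-- If a finite group `H` acts transitively on a finite set `X` and contains an
abelian subgroup acting transitively on `X`, then the complex permutation
representation `ℂ[X]` is multiplicity-free: any two equivariant embeddings of an
irreducible representation into `ℂ[X]` have the same image. -/
theorem stmt_14 (H X : Type) [Group H] [Fintype H] [Fintype X] [MulAction H X]
    (htrans : MulAction.IsPretransitive H X)
    (A : Subgroup H) (habel : ∀ a ∈ A, ∀ b ∈ A, a * b = b * a)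
    (hAtrans : ∀ x y : X, ∃ g ∈ A, g • x = y)
    (V : Type) [AddCommGroup V] [Module ℂ V] (π : Representation ℂ H V)
    (hirr : π.IsIrred)
    (j₁ j₂ : V →ₗ[ℂ] (X →₀ ℂ))
    (h₁ : Function.Injective j₁) (h₂ : Function.Injective j₂)
    (he₁ : ∀ (g : H) (x : V), j₁ (π g x) = (Representation.ofMulAction ℂ H X g (MonoidAlgebra.ofCoeff (j₁ x))).coeff)
    (he₂ : ∀ (g : H) (x : V), j₂ (π g x) = (Representation.ofMulAction ℂ H X g (MonoidAlgebra.ofCoeff (j₂ x))).coeff) :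
    LinearMap.range j₁ = LinearMap.range j₂ := by
  haveI : FiniteDimensional ℂ V := FiniteDimensional.of_injective j₁ h₁
  haveI : Nontrivial V := hirr.1
  set S : Set (Module.End ℂ V) := {T | ∃ a ∈ A, T = π a} with hSdef
  have hS : ∀ T ∈ S, ∀ T' ∈ S, Commute T T' := by
    rintro T ⟨a, ha, rfl⟩ T' ⟨b, hb, rfl⟩
    show π a * π b = π b * π a
    rw [← map_mul, ← map_mul, habel a ha b hb]
  obtain ⟨v, hv0, hv⟩ := simul_eigenvector (Module.finrank ℂ V) V le_rfl S hS
  set f := j₁ v with hfdef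
  set g := j₂ v with hgdef
  have hf0 : f ≠ 0 := fun h => hv0 (h₁ (by simpa using h))
  have hg0 : g ≠ 0 := fun h => hv0 (h₂ (by simpa using h))
  obtain ⟨x₀, hx₀⟩ : ∃ x₀ : X, f x₀ ≠ 0 := by
    by_contra hc
    push_neg at hc
    exact hf0 (Finsupp.ext hc)
  set d : ℂ := g x₀ / f x₀ with hddef
  have hgx₀ : g x₀ = d * f x₀ := by rw [hddef]; field_simp
  have key : g = d • f := by
    apply Finsupp.ext
    intro x
    obtain ⟨a, ha, hax⟩ := hAtrans x₀ x
    obtain ⟨μ, hμ⟩ := hv (π (a⁻¹)) ⟨a⁻¹, A.inv_mem ha, rfl⟩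
    have hf : (Representation.ofMulAction ℂ H X a⁻¹ (MonoidAlgebra.ofCoeff f)).coeff = μ • f := by
      rw [hfdef, ← he₁, hμ, map_smul]
    have hg : (Representation.ofMulAction ℂ H X a⁻¹ (MonoidAlgebra.ofCoeff g)).coeff = μ • g := by
      rw [hgdef, ← he₂, hμ, map_smul]
    have hfx : f x = μ * f x₀ := by
      have := congrArg (fun u : X →₀ ℂ => u x₀) hf
      simpa [Representation.ofMulAction_apply, hax] using this
    have hgx : g x = μ * g x₀ := by
      have := congrArg (fun u : X →₀ ℂ => u x₀) hg
      simpa [Representation.ofMulAction_apply, hax] using this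
    rw [Finsupp.smul_apply, hgx, hfx, hgx₀, smul_eq_mul]
    ring
  have hd0 : d ≠ 0 := fun h => hg0 (by rw [key, h, zero_smul])
  set K := LinearMap.ker (d • j₁ - j₂) with hKdef
  have hinv : ∀ (h : H), ∀ x ∈ K, π h x ∈ K := by
    intro h x hx
    rw [hKdef, LinearMap.mem_ker, LinearMap.sub_apply, LinearMap.smul_apply] at hx ⊢
    rw [he₁, he₂]
    ext y
    have := congrArg (fun u : X →₀ ℂ => u (h⁻¹ • y)) hx
    simpa using this
  have hKtop : K = ⊤ := by
    rcases hirr.2 K hinv with hbot | htop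
    · exfalso
      apply hv0
      have hvK : v ∈ K := by
        rw [hKdef, LinearMap.mem_ker, LinearMap.sub_apply, LinearMap.smul_apply,
          ← hfdef, ← hgdef, key, sub_self]
      rw [hbot] at hvK
      simpa using hvK
    · exact htop
  have heq : ∀ x : V, j₂ x = d • j₁ x := by
    intro x
    have hx : x ∈ K := hKtop ▸ Submodule.mem_top
    rw [hKdef, LinearMap.mem_ker, LinearMap.sub_apply, LinearMap.smul_apply,
      sub_eq_zero] at hx
    exact hx.symm
  ext y
  simp only [LinearMap.mem_range]
  constructor
  · rintro ⟨x, rfl⟩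
    exact ⟨d⁻¹ • x, by rw [map_smul, heq, smul_smul, inv_mul_cancel₀ hd0, one_smul]⟩
  · rintro ⟨x, rfl⟩
    exact ⟨d • x, by rw [map_smul, heq]⟩
end
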